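/- Suppose r, Ω, ψ satisfy the toroidally symmetric Einstein–Klein-Gordon system (EKG1)–(EKG5) on U, and let ϖ = (2rᵤrᵥr/Ω²)e^{4πgψ²} + r³/(2l²). If at a point p ∈ U one has rᵤ(p) ≤ 0 ≤ rᵥ(p), ϖ(p) ≥ 0, and ψ(p)² ≤ κ/(2π(9/4 − κ²)), then ∂ᵤϖ(p) ≤ 0 ≤ ∂ᵥϖ(p); that is, the renormalised Hawking mass is nonincreasing in u and nondecreasing in v at such points. -/

import Mathlib

/-- Partial derivative in the first (`u`) coordinate. -/
noncomputable def pdu (f : ℝ × ℝ → ℝ) (p : ℝ × ℝ) : ℝ := deriv (fun u => f (u, p.2)) p.1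

/-- Partial derivative in the second (`v`) coordinate. -/
noncomputable def pdv (f : ℝ × ℝ → ℝ) (p : ℝ × ℝ) : ℝ := deriv (fun v => f (p.1, v)) p.2

/-- The final renormalised Hawking mass `ϖ = (2rᵤrᵥr/Ω²)e^{4πgψ²} + r³/(2l²)`. -/
noncomputable def varpi (l g : ℝ) (r Ω ψ : ℝ × ℝ → ℝ) (q : ℝ × ℝ) : ℝ :=
  2 * pdu r q * pdv r q * r q / (Ω q) ^ 2 * Real.exp (4 * Real.pi * g * (ψ q) ^ 2)
    + (r q) ^ 3 / (2 * l ^ 2)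

lemma exp_le_quad {t : ℝ} (ht : t ≤ 0) : Real.exp t ≤ 1 + t + t ^ 2 / 2 := by
  have hder : ∀ s : ℝ, HasDerivAt (fun s : ℝ => 1 + s + s ^ 2 / 2 - Real.exp s)
      (1 + s - Real.exp s) s := by
    intro s
    have h1 : HasDerivAt (fun s : ℝ => 1 + s + s ^ 2 / 2) (1 + s) s := by
      have := (((hasDerivAt_id s).const_add (1:ℝ)).add ((hasDerivAt_pow 2 s).div_const 2))
      exact this.congr_deriv (by push_cast; ring)
    exact h1.sub (Real.hasDerivAt_exp s)
  have hanti : Antitone (fun s : ℝ => 1 + s + s ^ 2 / 2 - Real.exp s) := by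
    apply antitone_of_deriv_nonpos
    · exact fun s => (hder s).differentiableAt
    · intro s
      rw [(hder s).deriv]
      nlinarith [Real.add_one_le_exp s]
  have := hanti ht
  simp only [Real.exp_zero] at this
  nlinarith [this]

lemma pdu_hasDerivAt {f : ℝ × ℝ → ℝ} {q : ℝ × ℝ} (hf : DifferentiableAt ℝ f q) :
    HasDerivAt (fun u => f (u, q.2)) (pdu f q) q.1 := by
  obtain ⟨x, y⟩ := q
  have hφ : HasDerivAt (fun u : ℝ => (u, y)) ((1:ℝ), (0:ℝ)) x :=
    (hasDerivAt_id x).prodMk (hasDerivAt_const x y)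
  have h : HasDerivAt (fun u => f (u, y)) (fderiv ℝ f (x, y) (1, 0)) x :=
    hf.hasFDerivAt.comp_hasDerivAt x hφ
  rw [show pdu f (x, y) = fderiv ℝ f (x, y) (1, 0) from h.deriv]
  exact h

lemma pdv_hasDerivAt {f : ℝ × ℝ → ℝ} {q : ℝ × ℝ} (hf : DifferentiableAt ℝ f q) :
    HasDerivAt (fun v => f (q.1, v)) (pdv f q) q.2 := by
  obtain ⟨x, y⟩ := q
  have hφ : HasDerivAt (fun v : ℝ => (x, v)) ((0:ℝ), (1:ℝ)) y :=
    (hasDerivAt_const y x).prodMk (hasDerivAt_id y)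
  have h : HasDerivAt (fun v => f (x, v)) (fderiv ℝ f (x, y) (0, 1)) y :=
    hf.hasFDerivAt.comp_hasDerivAt y hφ
  rw [show pdv f (x, y) = fderiv ℝ f (x, y) (0, 1) from h.deriv]
  exact h

lemma pdu_eq_fderiv {f : ℝ × ℝ → ℝ} {q : ℝ × ℝ} (hf : DifferentiableAt ℝ f q) :
    pdu f q = fderiv ℝ f q (1, 0) := by
  obtain ⟨x, y⟩ := q
  have hφ : HasDerivAt (fun u : ℝ => (u, y)) ((1:ℝ), (0:ℝ)) x :=
    (hasDerivAt_id x).prodMk (hasDerivAt_const x y)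
  exact (hf.hasFDerivAt.comp_hasDerivAt x hφ).deriv

lemma pdv_eq_fderiv {f : ℝ × ℝ → ℝ} {q : ℝ × ℝ} (hf : DifferentiableAt ℝ f q) :
    pdv f q = fderiv ℝ f q (0, 1) := by
  obtain ⟨x, y⟩ := q
  have hφ : HasDerivAt (fun v : ℝ => (x, v)) ((0:ℝ), (1:ℝ)) y :=
    (hasDerivAt_const y x).prodMk (hasDerivAt_id y)
  exact (hf.hasFDerivAt.comp_hasDerivAt y hφ).deriv

section
variable {U : Set (ℝ × ℝ)} {f : ℝ × ℝ → ℝ} {p : ℝ × ℝ}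

lemma diffAt_of_C2 (hU : IsOpen U) (hf : ContDiffOn ℝ 2 f U) {q : ℝ × ℝ} (hq : q ∈ U) :
    DifferentiableAt ℝ f q :=
  (hf.differentiableOn (by norm_num)).differentiableAt (hU.mem_nhds hq)

lemma fderiv_diffAt (hU : IsOpen U) (hf : ContDiffOn ℝ 2 f U) (hp : p ∈ U) :
    DifferentiableAt ℝ (fderiv ℝ f) p :=
  ((hf.fderiv_of_isOpen (m := 1) hU (by norm_num)).differentiableOn one_ne_zero).differentiableAt
    (hU.mem_nhds hp)

lemma pdu_eventuallyEq (hU : IsOpen U) (hf : ContDiffOn ℝ 2 f U) (hp : p ∈ U) :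
    pdu f =ᶠ[nhds p] fun q => fderiv ℝ f q (1, 0) := by
  filter_upwards [hU.mem_nhds hp] with q hq
  exact pdu_eq_fderiv (diffAt_of_C2 hU hf hq)

lemma pdv_eventuallyEq (hU : IsOpen U) (hf : ContDiffOn ℝ 2 f U) (hp : p ∈ U) :
    pdv f =ᶠ[nhds p] fun q => fderiv ℝ f q (0, 1) := by
  filter_upwards [hU.mem_nhds hp] with q hq
  exact pdv_eq_fderiv (diffAt_of_C2 hU hf hq)

lemma pdu_diffAt (hU : IsOpen U) (hf : ContDiffOn ℝ 2 f U) (hp : p ∈ U) :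
    DifferentiableAt ℝ (pdu f) p := by
  have hG : DifferentiableAt ℝ (fun q => fderiv ℝ f q (1, 0)) p :=
    (ContinuousLinearMap.apply ℝ ℝ ((1:ℝ), (0:ℝ))).differentiableAt.comp p
      (fderiv_diffAt hU hf hp)
  exact hG.congr_of_eventuallyEq (pdu_eventuallyEq hU hf hp)

lemma pdv_diffAt (hU : IsOpen U) (hf : ContDiffOn ℝ 2 f U) (hp : p ∈ U) :
    DifferentiableAt ℝ (pdv f) p := by
  have hG : DifferentiableAt ℝ (fun q => fderiv ℝ f q (0, 1)) p :=
    (ContinuousLinearMap.apply ℝ ℝ ((0:ℝ), (1:ℝ))).differentiableAt.comp p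
      (fderiv_diffAt hU hf hp)
  exact hG.congr_of_eventuallyEq (pdv_eventuallyEq hU hf hp)

lemma clairaut (hU : IsOpen U) (hf : ContDiffOn ℝ 2 f U) (hp : p ∈ U) :
    pdu (pdv f) p = pdv (pdu f) p := by
  obtain ⟨p1, p2⟩ := p
  have hF : DifferentiableAt ℝ (fderiv ℝ f) (p1, p2) := fderiv_diffAt hU hf hp
  have ev : ∀ᶠ y in nhds (p1, p2), HasFDerivAt f (fderiv ℝ f y) y := by
    filter_upwards [hU.mem_nhds hp] with q hq
    exact (diffAt_of_C2 hU hf hq).hasFDerivAt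
  have symm := second_derivative_symmetric_of_eventually ev hF.hasFDerivAt
    ((1:ℝ), (0:ℝ)) ((0:ℝ), (1:ℝ))
  -- LHS
  have hG01 : HasFDerivAt (fun q => fderiv ℝ f q (0, 1))
      ((ContinuousLinearMap.apply ℝ ℝ ((0:ℝ), (1:ℝ))).comp (fderiv ℝ (fderiv ℝ f) (p1, p2)))
      (p1, p2) :=
    (ContinuousLinearMap.apply ℝ ℝ ((0:ℝ), (1:ℝ))).hasFDerivAt.comp _ hF.hasFDerivAt
  have hG10 : HasFDerivAt (fun q => fderiv ℝ f q (1, 0))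
      ((ContinuousLinearMap.apply ℝ ℝ ((1:ℝ), (0:ℝ))).comp (fderiv ℝ (fderiv ℝ f) (p1, p2)))
      (p1, p2) :=
    (ContinuousLinearMap.apply ℝ ℝ ((1:ℝ), (0:ℝ))).hasFDerivAt.comp _ hF.hasFDerivAt
  have e1 : pdu (pdv f) (p1, p2) = pdu (fun q => fderiv ℝ f q (0, 1)) (p1, p2) := by
    show deriv (fun u => pdv f (u, p2)) p1 = deriv (fun u => fderiv ℝ f (u, p2) (0, 1)) p1
    apply Filter.EventuallyEq.deriv_eq
    have := (pdv_eventuallyEq hU hf hp).comp_tendsto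
      (Continuous.tendsto (continuous_id.prodMk continuous_const) p1 :
        Filter.Tendsto (fun u : ℝ => (u, p2)) (nhds p1) (nhds (p1, p2)))
    exact this
  have e2 : pdv (pdu f) (p1, p2) = pdv (fun q => fderiv ℝ f q (1, 0)) (p1, p2) := by
    show deriv (fun v => pdu f (p1, v)) p2 = deriv (fun v => fderiv ℝ f (p1, v) (1, 0)) p2
    apply Filter.EventuallyEq.deriv_eq
    exact (pdu_eventuallyEq hU hf hp).comp_tendsto
      (Continuous.tendsto (continuous_const.prodMk continuous_id) p2 :
        Filter.Tendsto (fun v : ℝ => (p1, v)) (nhds p2) (nhds (p1, p2)))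
  rw [e1, e2, pdu_eq_fderiv hG01.differentiableAt, pdv_eq_fderiv hG10.differentiableAt,
    hG01.fderiv, hG10.fderiv]
  exact symm
end

lemma f_nonneg {κ a g x : ℝ} (hκ0 : 0 < κ) (hκ1 : κ < 1)
    (ha : a = κ ^ 2 / 2 - 9 / 8) (hg : g = -3 / 2 + κ) (hx0 : 0 ≤ x)
    (hxle : x ≤ κ / (2 * Real.pi * (9 / 4 - κ ^ 2))) :
    0 ≤ Real.exp (4 * Real.pi * g * x) * (4 * Real.pi * a * x - 3 / 2) + 3 / 2
        - 2 * Real.pi * g ^ 2 * x := by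
  subst ha hg
  have hπ := Real.pi_pos
  have hgneg : -3 / 2 + κ < 0 := by linarith
  have haneg : κ ^ 2 / 2 - 9 / 8 < 0 := by nlinarith
  have ht : 4 * Real.pi * (-3 / 2 + κ) * x ≤ 0 := by
    have h1 : 4 * Real.pi * (-3 / 2 + κ) < 0 := by nlinarith
    nlinarith
  have hE2 := exp_le_quad ht
  have h94 : (0:ℝ) < 9 / 4 - κ ^ 2 := by nlinarith
  have hd : 0 < 2 * Real.pi * (9 / 4 - κ ^ 2) := by nlinarith [mul_pos hπ h94]
  have hk : 0 ≤ κ + 4 * Real.pi * (κ ^ 2 / 2 - 9 / 8) * x := by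
    have h := (le_div_iff₀ hd).mp hxle
    nlinarith
  have hC : 4 * Real.pi * (κ ^ 2 / 2 - 9 / 8) * x - 3 / 2 < 0 := by
    nlinarith [mul_nonneg (mul_nonneg hπ.le hx0) (neg_nonneg.2 haneg.le)]
  have h1 := mul_le_mul_of_nonpos_right hE2 (le_of_lt hC)
  have hQC : (1 + 4 * Real.pi * (-3 / 2 + κ) * x + (4 * Real.pi * (-3 / 2 + κ) * x) ^ 2 / 2)
        * (4 * Real.pi * (κ ^ 2 / 2 - 9 / 8) * x - 3 / 2) + 3 / 2
        - 2 * Real.pi * (-3 / 2 + κ) ^ 2 * x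
      = 8 * Real.pi ^ 2 * (-3 / 2 + κ) ^ 2 * x ^ 2
        * (κ + 4 * Real.pi * (κ ^ 2 / 2 - 9 / 8) * x) := by
    ring
  have h2 : 0 ≤ 8 * Real.pi ^ 2 * (-3 / 2 + κ) ^ 2 * x ^ 2
      * (κ + 4 * Real.pi * (κ ^ 2 / 2 - 9 / 8) * x) :=
    mul_nonneg (by positivity) hk
  linarith [h1, h2, hQC.ge, hQC.le]

lemma alg_v (l κ a g ru rv r ω ps psv A1 B1 : ℝ)
    (hl : 0 < l) (hκ0 : 0 < κ) (hκ1 : κ < 1)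
    (ha : a = κ ^ 2 / 2 - 9 / 8) (hg : g = -3 / 2 + κ)
    (hr : 0 < r) (hω : 0 < ω) (hru : ru ≤ 0) (hrv : 0 ≤ rv)
    (hA1 : A1 = -(ru * rv) / r + (2 * Real.pi * a * r / l ^ 2) * ω ^ 2 * ps ^ 2
        - 3 / 4 * (r / l ^ 2) * ω ^ 2)
    (hB1 : B1 = -(4 * Real.pi) * r * psv ^ 2 / ω ^ 2)
    (hϖ : 0 ≤ 2 * ru * rv * r / ω ^ 2 * Real.exp (4 * Real.pi * g * ps ^ 2)
        + r ^ 3 / (2 * l ^ 2))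
    (hxle : ps ^ 2 ≤ κ / (2 * Real.pi * (9 / 4 - κ ^ 2))) :
    0 ≤ 2 * (A1 * (rv / ω ^ 2) * r * Real.exp (4 * Real.pi * g * ps ^ 2)
        + ru * B1 * r * Real.exp (4 * Real.pi * g * ps ^ 2)
        + ru * (rv / ω ^ 2) * rv * Real.exp (4 * Real.pi * g * ps ^ 2)
        + ru * (rv / ω ^ 2) * r * (Real.exp (4 * Real.pi * g * ps ^ 2)
            * (8 * Real.pi * g * ps * psv)))
        + 3 * r ^ 2 * rv / (2 * l ^ 2) := by
  subst hA1 hB1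
  have hπ := Real.pi_pos
  set E : ℝ := Real.exp (4 * Real.pi * g * ps ^ 2) with hE
  have hE0 : 0 < E := Real.exp_pos _
  have hϖ' : 0 ≤ 4 * l ^ 2 * ru * rv * r * E + r ^ 3 * ω ^ 2 := by
    have h := mul_nonneg hϖ (show (0:ℝ) ≤ 2 * ω ^ 2 * l ^ 2 by positivity)
    have heq : (2 * ru * rv * r / ω ^ 2 * E + r ^ 3 / (2 * l ^ 2)) * (2 * ω ^ 2 * l ^ 2)
        = 4 * l ^ 2 * ru * rv * r * E + r ^ 3 * ω ^ 2 := by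
      field_simp; ring
    rwa [heq] at h
  have hP1 : 0 ≤ l ^ 2 * E * (-(8 * Real.pi * ru)) * r * (r * psv - g * rv * ps) ^ 2 := by
    have : 0 ≤ l ^ 2 * E * (-(8 * Real.pi * ru)) * r := by
      have : 0 ≤ -(8 * Real.pi * ru) := by nlinarith
      positivity
    exact mul_nonneg this (sq_nonneg _)
  have hP2 : 0 ≤ 2 * Real.pi * g ^ 2 * ps ^ 2 * rv
      * (4 * l ^ 2 * ru * rv * r * E + r ^ 3 * ω ^ 2) :=
    mul_nonneg (by positivity) hϖ'
  have hP3 : 0 ≤ ω ^ 2 * r ^ 3 * rv * (E * (4 * Real.pi * a * ps ^ 2 - 3 / 2) + 3 / 2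
      - 2 * Real.pi * g ^ 2 * ps ^ 2) :=
    mul_nonneg (mul_nonneg (by positivity) hrv)
      (f_nonneg hκ0 hκ1 ha hg (sq_nonneg ps) hxle)
  have key : 2 * ((-(ru * rv) / r + (2 * Real.pi * a * r / l ^ 2) * ω ^ 2 * ps ^ 2
        - 3 / 4 * (r / l ^ 2) * ω ^ 2) * (rv / ω ^ 2) * r * E
        + ru * (-(4 * Real.pi) * r * psv ^ 2 / ω ^ 2) * r * E
        + ru * (rv / ω ^ 2) * rv * E
        + ru * (rv / ω ^ 2) * r * (E * (8 * Real.pi * g * ps * psv)))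
        + 3 * r ^ 2 * rv / (2 * l ^ 2)
      = (l ^ 2 * E * (-(8 * Real.pi * ru)) * r * (r * psv - g * rv * ps) ^ 2
        + 2 * Real.pi * g ^ 2 * ps ^ 2 * rv * (4 * l ^ 2 * ru * rv * r * E + r ^ 3 * ω ^ 2)
        + ω ^ 2 * r ^ 3 * rv * (E * (4 * Real.pi * a * ps ^ 2 - 3 / 2) + 3 / 2
            - 2 * Real.pi * g ^ 2 * ps ^ 2)) / (ω ^ 2 * l ^ 2 * r) := by
    field_simp
    ring
  rw [key]
  exact div_nonneg (by linarith) (by positivity)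

lemma alg_u (l κ a g ru rv r ω ps psu A1 E1 : ℝ)
    (hl : 0 < l) (hκ0 : 0 < κ) (hκ1 : κ < 1)
    (ha : a = κ ^ 2 / 2 - 9 / 8) (hg : g = -3 / 2 + κ)
    (hr : 0 < r) (hω : 0 < ω) (hru : ru ≤ 0) (hrv : 0 ≤ rv)
    (hA1 : A1 = -(ru * rv) / r + (2 * Real.pi * a * r / l ^ 2) * ω ^ 2 * ps ^ 2
        - 3 / 4 * (r / l ^ 2) * ω ^ 2)
    (hE1 : E1 = -(4 * Real.pi) * r * psu ^ 2 / ω ^ 2)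
    (hϖ : 0 ≤ 2 * ru * rv * r / ω ^ 2 * Real.exp (4 * Real.pi * g * ps ^ 2)
        + r ^ 3 / (2 * l ^ 2))
    (hxle : ps ^ 2 ≤ κ / (2 * Real.pi * (9 / 4 - κ ^ 2))) :
    2 * (E1 * rv * r * Real.exp (4 * Real.pi * g * ps ^ 2)
        + ru / ω ^ 2 * A1 * r * Real.exp (4 * Real.pi * g * ps ^ 2)
        + ru / ω ^ 2 * rv * ru * Real.exp (4 * Real.pi * g * ps ^ 2)
        + ru / ω ^ 2 * rv * r * (Real.exp (4 * Real.pi * g * ps ^ 2)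
            * (8 * Real.pi * g * ps * psu)))
        + 3 * r ^ 2 * ru / (2 * l ^ 2) ≤ 0 := by
  subst hA1 hE1
  have hπ := Real.pi_pos
  set E : ℝ := Real.exp (4 * Real.pi * g * ps ^ 2) with hE
  have hE0 : 0 < E := Real.exp_pos _
  have hϖ' : 0 ≤ 4 * l ^ 2 * ru * rv * r * E + r ^ 3 * ω ^ 2 := by
    have h := mul_nonneg hϖ (show (0:ℝ) ≤ 2 * ω ^ 2 * l ^ 2 by positivity)
    have heq : (2 * ru * rv * r / ω ^ 2 * E + r ^ 3 / (2 * l ^ 2)) * (2 * ω ^ 2 * l ^ 2)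
        = 4 * l ^ 2 * ru * rv * r * E + r ^ 3 * ω ^ 2 := by
      field_simp; ring
    rwa [heq] at h
  have hQ1 : 0 ≤ l ^ 2 * E * (8 * Real.pi * rv) * r * (r * psu - g * ru * ps) ^ 2 := by
    have h0 : 0 ≤ l ^ 2 * E * (8 * Real.pi * rv) * r := by
      have : 0 ≤ 8 * Real.pi * rv := by positivity
      positivity
    exact mul_nonneg h0 (sq_nonneg _)
  have hQ2 : 0 ≤ -(2 * Real.pi * g ^ 2 * ps ^ 2 * ru)
      * (4 * l ^ 2 * ru * rv * r * E + r ^ 3 * ω ^ 2) := by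
    apply mul_nonneg _ hϖ'
    have : 0 ≤ 2 * Real.pi * g ^ 2 * ps ^ 2 := by positivity
    nlinarith
  have hQ3 : 0 ≤ ω ^ 2 * r ^ 3 * (-ru) * (E * (4 * Real.pi * a * ps ^ 2 - 3 / 2) + 3 / 2
      - 2 * Real.pi * g ^ 2 * ps ^ 2) :=
    mul_nonneg (mul_nonneg (by positivity) (neg_nonneg.2 hru))
      (f_nonneg hκ0 hκ1 ha hg (sq_nonneg ps) hxle)
  have key : 2 * (-(4 * Real.pi) * r * psu ^ 2 / ω ^ 2 * rv * r * E
        + ru / ω ^ 2 * (-(ru * rv) / r + (2 * Real.pi * a * r / l ^ 2) * ω ^ 2 * ps ^ 2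
            - 3 / 4 * (r / l ^ 2) * ω ^ 2) * r * E
        + ru / ω ^ 2 * rv * ru * E
        + ru / ω ^ 2 * rv * r * (E * (8 * Real.pi * g * ps * psu)))
        + 3 * r ^ 2 * ru / (2 * l ^ 2)
      = -((l ^ 2 * E * (8 * Real.pi * rv) * r * (r * psu - g * ru * ps) ^ 2
        + -(2 * Real.pi * g ^ 2 * ps ^ 2 * ru)
            * (4 * l ^ 2 * ru * rv * r * E + r ^ 3 * ω ^ 2)
        + ω ^ 2 * r ^ 3 * (-ru) * (E * (4 * Real.pi * a * ps ^ 2 - 3 / 2) + 3 / 2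
            - 2 * Real.pi * g ^ 2 * ps ^ 2)) / (ω ^ 2 * l ^ 2 * r)) := by
    field_simp
    ring
  rw [key]
  have : 0 ≤ (l ^ 2 * E * (8 * Real.pi * rv) * r * (r * psu - g * ru * ps) ^ 2
        + -(2 * Real.pi * g ^ 2 * ps ^ 2 * ru)
            * (4 * l ^ 2 * ru * rv * r * E + r ^ 3 * ω ^ 2)
        + ω ^ 2 * r ^ 3 * (-ru) * (E * (4 * Real.pi * a * ps ^ 2 - 3 / 2) + 3 / 2
            - 2 * Real.pi * g ^ 2 * ps ^ 2)) / (ω ^ 2 * l ^ 2 * r) :=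
    div_nonneg (by linarith) (by positivity)
  linarith

lemma pdv_varpi {U : Set (ℝ × ℝ)} {r Ω ψ : ℝ × ℝ → ℝ} {p : ℝ × ℝ} (l g : ℝ)
    (hU : IsOpen U) (hrC : ContDiffOn ℝ 2 r U) (hΩC : ContDiffOn ℝ 2 Ω U)
    (hψC : ContDiffOn ℝ 2 ψ U) (hp : p ∈ U) (hΩ0 : Ω p ≠ 0) :
    pdv (varpi l g r Ω ψ) p
      = 2 * (pdv (pdu r) p * (pdv r p / Ω p ^ 2) * r p * Real.exp (4 * Real.pi * g * ψ p ^ 2)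
        + pdu r p * pdv (fun q => pdv r q / Ω q ^ 2) p * r p
            * Real.exp (4 * Real.pi * g * ψ p ^ 2)
        + pdu r p * (pdv r p / Ω p ^ 2) * pdv r p * Real.exp (4 * Real.pi * g * ψ p ^ 2)
        + pdu r p * (pdv r p / Ω p ^ 2) * r p
            * (Real.exp (4 * Real.pi * g * ψ p ^ 2) * (8 * Real.pi * g * ψ p * pdv ψ p)))
        + 3 * r p ^ 2 * pdv r p / (2 * l ^ 2) := by
  obtain ⟨p1, p2⟩ := p
  have hR : HasDerivAt (fun v => r (p1, v)) (pdv r (p1, p2)) p2 :=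
    pdv_hasDerivAt (diffAt_of_C2 hU hrC hp)
  have hA : HasDerivAt (fun v => pdu r (p1, v)) (pdv (pdu r) (p1, p2)) p2 :=
    pdv_hasDerivAt (pdu_diffAt hU hrC hp)
  have hΩ2 : DifferentiableAt ℝ (fun q : ℝ × ℝ => Ω q ^ 2) (p1, p2) :=
    (diffAt_of_C2 hU hΩC hp).pow 2
  have hWd : DifferentiableAt ℝ (fun q => pdv r q / Ω q ^ 2) (p1, p2) := by
    simp only [div_eq_mul_inv]
    exact (pdv_diffAt hU hrC hp).mul (hΩ2.inv (pow_ne_zero 2 hΩ0))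
  have hB : HasDerivAt (fun v => pdv r (p1, v) / Ω (p1, v) ^ 2)
      (pdv (fun q => pdv r q / Ω q ^ 2) (p1, p2)) p2 := pdv_hasDerivAt hWd
  have hP : HasDerivAt (fun v => ψ (p1, v)) (pdv ψ (p1, p2)) p2 :=
    pdv_hasDerivAt (diffAt_of_C2 hU hψC hp)
  have hE : HasDerivAt (fun v => Real.exp (4 * Real.pi * g * ψ (p1, v) ^ 2))
      (Real.exp (4 * Real.pi * g * ψ (p1, p2) ^ 2)
        * (8 * Real.pi * g * ψ (p1, p2) * pdv ψ (p1, p2))) p2 := by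
    have h := (((hP.fun_pow 2).const_mul (4 * Real.pi * g)).exp)
    exact h.congr_deriv (by push_cast; ring)
  have hD : HasDerivAt
      (fun v => 2 * pdu r (p1, v) * (pdv r (p1, v) / Ω (p1, v) ^ 2) * r (p1, v)
          * Real.exp (4 * Real.pi * g * ψ (p1, v) ^ 2) + r (p1, v) ^ 3 / (2 * l ^ 2))
      (2 * (pdv (pdu r) (p1, p2) * (pdv r (p1, p2) / Ω (p1, p2) ^ 2) * r (p1, p2)
            * Real.exp (4 * Real.pi * g * ψ (p1, p2) ^ 2)
        + pdu r (p1, p2) * pdv (fun q => pdv r q / Ω q ^ 2) (p1, p2) * r (p1, p2)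
            * Real.exp (4 * Real.pi * g * ψ (p1, p2) ^ 2)
        + pdu r (p1, p2) * (pdv r (p1, p2) / Ω (p1, p2) ^ 2) * pdv r (p1, p2)
            * Real.exp (4 * Real.pi * g * ψ (p1, p2) ^ 2)
        + pdu r (p1, p2) * (pdv r (p1, p2) / Ω (p1, p2) ^ 2) * r (p1, p2)
            * (Real.exp (4 * Real.pi * g * ψ (p1, p2) ^ 2)
               * (8 * Real.pi * g * ψ (p1, p2) * pdv ψ (p1, p2))))
        + 3 * r (p1, p2) ^ 2 * pdv r (p1, p2) / (2 * l ^ 2)) p2 := by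
    have h := ((((hA.const_mul (2:ℝ)).fun_mul hB).fun_mul hR).fun_mul hE).add
      ((hR.fun_pow 3).div_const (2 * l ^ 2))
    exact h.congr_deriv (by push_cast; ring)
  have hfun : (fun v => varpi l g r Ω ψ (p1, v))
      = fun v => 2 * pdu r (p1, v) * (pdv r (p1, v) / Ω (p1, v) ^ 2) * r (p1, v)
          * Real.exp (4 * Real.pi * g * ψ (p1, v) ^ 2) + r (p1, v) ^ 3 / (2 * l ^ 2) := by
    funext v
    unfold varpi
    ring
  show deriv (fun v => varpi l g r Ω ψ (p1, v)) p2 = _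
  rw [hfun]
  exact hD.deriv

lemma pdu_varpi {U : Set (ℝ × ℝ)} {r Ω ψ : ℝ × ℝ → ℝ} {p : ℝ × ℝ} (l g : ℝ)
    (hU : IsOpen U) (hrC : ContDiffOn ℝ 2 r U) (hΩC : ContDiffOn ℝ 2 Ω U)
    (hψC : ContDiffOn ℝ 2 ψ U) (hp : p ∈ U) (hΩ0 : Ω p ≠ 0) :
    pdu (varpi l g r Ω ψ) p
      = 2 * (pdu (fun q => pdu r q / Ω q ^ 2) p * pdv r p * r p
            * Real.exp (4 * Real.pi * g * ψ p ^ 2)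
        + pdu r p / Ω p ^ 2 * pdu (pdv r) p * r p * Real.exp (4 * Real.pi * g * ψ p ^ 2)
        + pdu r p / Ω p ^ 2 * pdv r p * pdu r p * Real.exp (4 * Real.pi * g * ψ p ^ 2)
        + pdu r p / Ω p ^ 2 * pdv r p * r p
            * (Real.exp (4 * Real.pi * g * ψ p ^ 2) * (8 * Real.pi * g * ψ p * pdu ψ p)))
        + 3 * r p ^ 2 * pdu r p / (2 * l ^ 2) := by
  obtain ⟨p1, p2⟩ := p
  have hR : HasDerivAt (fun u => r (u, p2)) (pdu r (p1, p2)) p1 :=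
    pdu_hasDerivAt (diffAt_of_C2 hU hrC hp)
  have hB : HasDerivAt (fun u => pdv r (u, p2)) (pdu (pdv r) (p1, p2)) p1 :=
    pdu_hasDerivAt (pdv_diffAt hU hrC hp)
  have hΩ2 : DifferentiableAt ℝ (fun q : ℝ × ℝ => Ω q ^ 2) (p1, p2) :=
    (diffAt_of_C2 hU hΩC hp).pow 2
  have hWd : DifferentiableAt ℝ (fun q => pdu r q / Ω q ^ 2) (p1, p2) := by
    simp only [div_eq_mul_inv]
    exact (pdu_diffAt hU hrC hp).mul (hΩ2.inv (pow_ne_zero 2 hΩ0))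
  have hA : HasDerivAt (fun u => pdu r (u, p2) / Ω (u, p2) ^ 2)
      (pdu (fun q => pdu r q / Ω q ^ 2) (p1, p2)) p1 := pdu_hasDerivAt hWd
  have hP : HasDerivAt (fun u => ψ (u, p2)) (pdu ψ (p1, p2)) p1 :=
    pdu_hasDerivAt (diffAt_of_C2 hU hψC hp)
  have hE : HasDerivAt (fun u => Real.exp (4 * Real.pi * g * ψ (u, p2) ^ 2))
      (Real.exp (4 * Real.pi * g * ψ (p1, p2) ^ 2)
        * (8 * Real.pi * g * ψ (p1, p2) * pdu ψ (p1, p2))) p1 := by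
    have h := (((hP.fun_pow 2).const_mul (4 * Real.pi * g)).exp)
    exact h.congr_deriv (by push_cast; ring)
  have hD : HasDerivAt
      (fun u => 2 * (pdu r (u, p2) / Ω (u, p2) ^ 2) * pdv r (u, p2) * r (u, p2)
          * Real.exp (4 * Real.pi * g * ψ (u, p2) ^ 2) + r (u, p2) ^ 3 / (2 * l ^ 2))
      (2 * (pdu (fun q => pdu r q / Ω q ^ 2) (p1, p2) * pdv r (p1, p2) * r (p1, p2)
            * Real.exp (4 * Real.pi * g * ψ (p1, p2) ^ 2)
        + pdu r (p1, p2) / Ω (p1, p2) ^ 2 * pdu (pdv r) (p1, p2) * r (p1, p2)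
            * Real.exp (4 * Real.pi * g * ψ (p1, p2) ^ 2)
        + pdu r (p1, p2) / Ω (p1, p2) ^ 2 * pdv r (p1, p2) * pdu r (p1, p2)
            * Real.exp (4 * Real.pi * g * ψ (p1, p2) ^ 2)
        + pdu r (p1, p2) / Ω (p1, p2) ^ 2 * pdv r (p1, p2) * r (p1, p2)
            * (Real.exp (4 * Real.pi * g * ψ (p1, p2) ^ 2)
               * (8 * Real.pi * g * ψ (p1, p2) * pdu ψ (p1, p2))))
        + 3 * r (p1, p2) ^ 2 * pdu r (p1, p2) / (2 * l ^ 2)) p1 := by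
    have h := ((((hA.const_mul (2:ℝ)).fun_mul hB).fun_mul hR).fun_mul hE).add
      ((hR.fun_pow 3).div_const (2 * l ^ 2))
    exact h.congr_deriv (by push_cast; ring)
  have hfun : (fun u => varpi l g r Ω ψ (u, p2))
      = fun u => 2 * (pdu r (u, p2) / Ω (u, p2) ^ 2) * pdv r (u, p2) * r (u, p2)
          * Real.exp (4 * Real.pi * g * ψ (u, p2) ^ 2) + r (u, p2) ^ 3 / (2 * l ^ 2) := by
    funext u
    unfold varpi
    ring
  show deriv (fun u => varpi l g r Ω ψ (u, p2)) p1 = _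
  rw [hfun]
  exact hD.deriv

/-- Monotonicity of the renormalised Hawking mass: if `r, Ω, ψ` satisfy the
toroidally symmetric Einstein–Klein-Gordon system (EKG1)–(EKG5) on `U`, and at a
point `p ∈ U` one has `rᵤ(p) ≤ 0 ≤ rᵥ(p)`, `ϖ(p) ≥ 0` and
`ψ(p)² ≤ κ/(2π(9/4 − κ²))`, then `∂ᵤϖ(p) ≤ 0 ≤ ∂ᵥϖ(p)`. -/
theorem stmt_5 (U : Set (ℝ × ℝ)) (hU : IsOpen U)
    (r Ω ψ : ℝ × ℝ → ℝ)
    (l κ a g : ℝ) (hl : 0 < l) (hκ : κ ∈ Set.Ioo (0 : ℝ) 1)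
    (ha : a = κ ^ 2 / 2 - 9 / 8) (hg : g = -3 / 2 + κ)
    (hrC : ContDiffOn ℝ 2 r U) (hΩC : ContDiffOn ℝ 2 Ω U) (hψC : ContDiffOn ℝ 2 ψ U)
    (hrpos : ∀ p ∈ U, 0 < r p) (hΩpos : ∀ p ∈ U, 0 < Ω p)
    (hEKG1 : ∀ p ∈ U, pdu (fun q => pdu r q / (Ω q) ^ 2) p
        = -(4 * Real.pi) * r p * (pdu ψ p) ^ 2 / (Ω p) ^ 2)
    (hEKG2 : ∀ p ∈ U, pdv (fun q => pdv r q / (Ω q) ^ 2) p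
        = -(4 * Real.pi) * r p * (pdv ψ p) ^ 2 / (Ω p) ^ 2)
    (hEKG3 : ∀ p ∈ U, pdv (pdu r) p = -(pdu r p * pdv r p) / r p
        + (2 * Real.pi * a * r p / l ^ 2) * (Ω p) ^ 2 * (ψ p) ^ 2
        - (3 / 4) * (r p / l ^ 2) * (Ω p) ^ 2)
    (hEKG4 : ∀ p ∈ U, pdv (pdu (fun q => Real.log (Ω q))) p
        = -(4 * Real.pi) * pdu ψ p * pdv ψ p + (pdu r p * pdv r p) / (r p) ^ 2)
    (hEKG5 : ∀ p ∈ U, pdv (pdu ψ) p = -(pdu r p / r p) * pdv ψ p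
        - (pdv r p / r p) * pdu ψ p - ((Ω p) ^ 2 * a / (2 * l ^ 2)) * ψ p)
    (p : ℝ × ℝ) (hp : p ∈ U)
    (hpu : pdu r p ≤ 0) (hpv : 0 ≤ pdv r p)
    (hϖ : 0 ≤ varpi l g r Ω ψ p)
    (hψsmall : (ψ p) ^ 2 ≤ κ / (2 * Real.pi * (9 / 4 - κ ^ 2))) :
    pdu (varpi l g r Ω ψ) p ≤ 0 ∧ 0 ≤ pdv (varpi l g r Ω ψ) p := by
  obtain ⟨hκ0, hκ1⟩ := hκ
  have hΩ0 : Ω p ≠ 0 := ne_of_gt (hΩpos p hp)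
  have hϖ' : 0 ≤ 2 * pdu r p * pdv r p * r p / Ω p ^ 2
      * Real.exp (4 * Real.pi * g * ψ p ^ 2) + r p ^ 3 / (2 * l ^ 2) := hϖ
  constructor
  · rw [pdu_varpi l g hU hrC hΩC hψC hp hΩ0]
    exact alg_u l κ a g (pdu r p) (pdv r p) (r p) (Ω p) (ψ p) (pdu ψ p)
      (pdu (pdv r) p) (pdu (fun q => pdu r q / Ω q ^ 2) p)
      hl hκ0 hκ1 ha hg (hrpos p hp) (hΩpos p hp) hpu hpv
      ((clairaut hU hrC hp).trans (hEKG3 p hp)) (hEKG1 p hp) hϖ' hψsmall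
  · rw [pdv_varpi l g hU hrC hΩC hψC hp hΩ0]
    exact alg_v l κ a g (pdu r p) (pdv r p) (r p) (Ω p) (ψ p) (pdv ψ p)
      (pdv (pdu r) p) (pdv (fun q => pdv r q / Ω q ^ 2) p)
      hl hκ0 hκ1 ha hg (hrpos p hp) (hΩpos p hp) hpu hpv
      (hEKG3 p hp) (hEKG2 p hp) hϖ' hψsmall
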